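/- Let f be a multiplicative arithmetic function taking nonnegative real values and let U be a set of primes such that ∑_{e ≥ 0} f(p^e) converges for each p ∈ U and the product ∏_{p ∈ U} ∑_{e ≥ 0} f(p^e) converges. Then for every real x ≥ 1, ∑_{n ≤ x, gcd(n, p) = 1 for all p ∈ U} f(n) ≥ (∑_{n ≤ x} f(n)) / ∏_{p ∈ U} ∑_{e ≥ 0} f(p^e). -/

import Mathlib

open Finset

lemma step_lemma (f : ℕ → ℝ)
    (hfmul : ∀ m n : ℕ, Nat.Coprime m n → f (m * n) = f m * f n)
    (hfnonneg : ∀ n, 0 ≤ f n)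
    (N p : ℕ) (hp : p.Prime) (hs : Summable (fun e : ℕ => f (p ^ e)))
    (s : Finset ℕ) :
    ∑ n ∈ (Finset.Icc 1 N).filter (fun n => ∀ q ∈ s, Nat.Coprime n q), f n ≤
    (∑ m ∈ (Finset.Icc 1 N).filter (fun n => ∀ q ∈ insert p s, Nat.Coprime n q), f m)
      * ∑' e : ℕ, f (p ^ e) := by
  set S := (Finset.Icc 1 N).filter (fun n => ∀ q ∈ s, Nat.Coprime n q) with hS
  set S' := (Finset.Icc 1 N).filter (fun n => ∀ q ∈ insert p s, Nat.Coprime n q) with hS'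
  set g : ℕ → ℕ × ℕ := fun n => (n.factorization p, n / p ^ n.factorization p) with hg
  have hSmem : ∀ n ∈ S, 1 ≤ n ∧ n ≤ N ∧ ∀ q ∈ s, Nat.Coprime n q := by
    intro n hn
    simp only [hS, mem_filter, mem_Icc] at hn
    exact ⟨hn.1.1, hn.1.2, hn.2⟩
  have heq : ∀ n ∈ S, n = p ^ (g n).1 * (g n).2 := by
    intro n hn
    exact (Nat.ordProj_mul_ordCompl_eq_self n p).symm
  have hcop : ∀ n ∈ S, Nat.Coprime (p ^ (g n).1) ((g n).2) := by
    intro n hn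
    have hn0 : n ≠ 0 := by have := (hSmem n hn).1; omega
    exact Nat.Coprime.pow_left _ (Nat.coprime_ordCompl hp hn0)
  have hval : ∀ n ∈ S, f n = f (p ^ (g n).1) * f ((g n).2) := by
    intro n hn
    conv_lhs => rw [heq n hn]
    exact hfmul _ _ (hcop n hn)
  have hmem : ∀ n ∈ S, g n ∈ (Finset.range (N + 1)) ×ˢ S' := by
    intro n hn
    obtain ⟨h1, h2, h3⟩ := hSmem n hn
    have hn0 : n ≠ 0 := by omega
    have hlt : (g n).1 < N + 1 := lt_of_le_of_lt
      (le_trans (le_of_lt (Nat.factorization_lt p hn0)) h2) (by omega)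
    have hm1 : 1 ≤ (g n).2 := Nat.ordCompl_pos p hn0
    have hm2 : (g n).2 ≤ N := le_trans (Nat.ordCompl_le n p) h2
    have hdvd : (g n).2 ∣ n := Nat.ordCompl_dvd n p
    simp only [mem_product, mem_range, hS', mem_filter, mem_Icc]
    refine ⟨hlt, ⟨hm1, hm2⟩, ?_⟩
    intro q hq
    rcases mem_insert.mp hq with rfl | hq
    · exact (Nat.coprime_ordCompl hp hn0).symm
    · exact Nat.Coprime.coprime_dvd_left hdvd (h3 q hq)
  have hinj : ∀ n ∈ S, ∀ m ∈ S, g n = g m → n = m := by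
    intro n hn m hm hgm
    rw [heq n hn, heq m hm, hgm]
  calc ∑ n ∈ S, f n = ∑ n ∈ S, f (p ^ (g n).1) * f ((g n).2) :=
        Finset.sum_congr rfl hval
    _ = ∑ q ∈ S.image g, f (p ^ q.1) * f q.2 := (Finset.sum_image (f := fun q : ℕ × ℕ => f (p ^ q.1) * f q.2) hinj).symm
    _ ≤ ∑ q ∈ (Finset.range (N + 1)) ×ˢ S', f (p ^ q.1) * f q.2 := by
        refine Finset.sum_le_sum_of_subset_of_nonneg ?_ (fun q _ _ => mul_nonneg (hfnonneg _) (hfnonneg _))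
        exact Finset.image_subset_iff.mpr hmem
    _ = (∑ e ∈ Finset.range (N + 1), f (p ^ e)) * (∑ m ∈ S', f m) := by
        rw [Finset.sum_mul_sum, Finset.sum_product]
    _ ≤ (∑' e : ℕ, f (p ^ e)) * (∑ m ∈ S', f m) := by
        refine mul_le_mul_of_nonneg_right (Summable.sum_le_tsum _ (fun e _ => hfnonneg _) hs) ?_
        exact Finset.sum_nonneg (fun m _ => hfnonneg m)
    _ = (∑ m ∈ S', f m) * ∑' e : ℕ, f (p ^ e) := mul_comm _ _

lemma aux_lemma (f : ℕ → ℝ)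
    (hfmul : ∀ m n : ℕ, Nat.Coprime m n → f (m * n) = f m * f n)
    (hfnonneg : ∀ n, 0 ≤ f n) (N : ℕ) :
    ∀ U : Finset ℕ, (∀ p ∈ U, p.Prime) → (∀ p ∈ U, Summable (fun e : ℕ => f (p ^ e))) →
    ∑ n ∈ Finset.Icc 1 N, f n ≤
      (∑ n ∈ (Finset.Icc 1 N).filter (fun n => ∀ p ∈ U, Nat.Coprime n p), f n)
        * ∏ p ∈ U, ∑' e : ℕ, f (p ^ e) := by
  intro U
  induction U using Finset.induction_on with
  | empty =>
      intro _ _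
      simp [Finset.filter_true_of_mem]
  | @insert a s ha ih =>
      intro hUp hUs
      have hap : a.Prime := hUp a (mem_insert_self a s)
      have has : Summable (fun e : ℕ => f (a ^ e)) := hUs a (mem_insert_self a s)
      have ih' := ih (fun p hp => hUp p (mem_insert_of_mem hp))
        (fun p hp => hUs p (mem_insert_of_mem hp))
      have hstep := step_lemma f hfmul hfnonneg N a hap has s
      have hprodnn : 0 ≤ ∏ p ∈ s, ∑' e : ℕ, f (p ^ e) :=
        Finset.prod_nonneg (fun p _ => tsum_nonneg (fun e => hfnonneg _))
      calc ∑ n ∈ Finset.Icc 1 N, f n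
          ≤ (∑ n ∈ (Finset.Icc 1 N).filter (fun n => ∀ p ∈ s, Nat.Coprime n p), f n)
            * ∏ p ∈ s, ∑' e : ℕ, f (p ^ e) := ih'
        _ ≤ ((∑ n ∈ (Finset.Icc 1 N).filter (fun n => ∀ p ∈ insert a s, Nat.Coprime n p), f n)
            * ∑' e : ℕ, f (a ^ e)) * ∏ p ∈ s, ∑' e : ℕ, f (p ^ e) :=
            mul_le_mul_of_nonneg_right hstep hprodnn
        _ = (∑ n ∈ (Finset.Icc 1 N).filter (fun n => ∀ p ∈ insert a s, Nat.Coprime n p), f n)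
            * ∏ p ∈ insert a s, ∑' e : ℕ, f (p ^ e) := by
            rw [Finset.prod_insert ha]; ring

open Finset in
theorem sum_coprime_ge_of_multiplicative (f : ℕ → ℝ) (U : Finset ℕ)
    (hf1 : f 1 = 1)
    (hfmul : ∀ m n : ℕ, Nat.Coprime m n → f (m * n) = f m * f n)
    (hfnonneg : ∀ n, 0 ≤ f n)
    (hUprime : ∀ p ∈ U, p.Prime)
    (hsum : ∀ p ∈ U, Summable (fun e : ℕ => f (p ^ e))) :
    ∀ x : ℝ, 1 ≤ x →
      (∑ n ∈ (Finset.Icc 1 ⌊x⌋₊).filter (fun n => ∀ p ∈ U, Nat.Coprime n p), f n)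
        ≥ (∑ n ∈ Finset.Icc 1 ⌊x⌋₊, f n) / ∏ p ∈ U, ∑' e : ℕ, f (p ^ e) := by
  intro x hx
  have hprodpos : 0 < ∏ p ∈ U, ∑' e : ℕ, f (p ^ e) := by
    refine Finset.prod_pos (fun p hp => ?_)
    have h1 : (1 : ℝ) ≤ ∑' e : ℕ, f (p ^ e) := by
      have := Summable.le_tsum (hsum p hp) 0 (fun j _ => hfnonneg _)
      simpa [hf1] using this
    linarith
  rw [ge_iff_le, div_le_iff₀ hprodpos]
  exact aux_lemma f hfmul hfnonneg ⌊x⌋₊ U hUprime hsum
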